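/- For a < b < c in C_n, the union of the two consecutive strings STR^{(n)}{a,b} and STR^{(n)}{b,c} is closed under pointwise max and under composition (it is a subsemiring of Ê_{C_n}). -/

import Mathlib

/-- The element `u_m v_{n-m}` of the string `STR^{(n)}{u,v}`. -/
def strMap (n : ℕ) (u v : Fin n) (m : ℕ) : Fin n → Fin n :=
  fun i => if (i : ℕ) < m then u else v

lemma strMap_comp (n : ℕ) (u v : Fin n) (k : ℕ) (β : Fin n → Fin n) :
    β ∘ strMap n u v k = strMap n (β u) (β v) k := by
  funext i
  simp only [Function.comp, strMap, apply_ite β]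

lemma strMap_const_lo (n : ℕ) (u v : Fin n) (k : ℕ) :
    strMap n u u k = strMap n u v n := by
  funext i; simp [strMap, i.isLt]

lemma strMap_const_hi (n : ℕ) (u v : Fin n) (k : ℕ) :
    strMap n v v k = strMap n u v 0 := by
  funext i; simp [strMap]

lemma comp_mem (n : ℕ) (u v u' v' : Fin n) (k l : ℕ) (hk : k ≤ n) (huv : u < v) :
    ∃ m ≤ n, strMap n u' v' l ∘ strMap n u v k = strMap n u' v' m := by
  rw [strMap_comp]
  have h1 : strMap n u' v' l u = if (u : ℕ) < l then u' else v' := rfl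
  have h2 : strMap n u' v' l v = if (v : ℕ) < l then u' else v' := rfl
  by_cases hu : (u : ℕ) < l
  · by_cases hv : (v : ℕ) < l
    · exact ⟨n, le_rfl, by rw [h1, h2, if_pos hu, if_pos hv, strMap_const_lo]⟩
    · exact ⟨k, hk, by rw [h1, h2, if_pos hu, if_neg hv]⟩
  · have hv : ¬ (v : ℕ) < l := fun hv => hu (lt_trans (Fin.lt_iff_val_lt_val.mp huv) hv)
    exact ⟨0, Nat.zero_le n, by rw [h1, h2, if_neg hu, if_neg hv, strMap_const_hi]⟩

lemma strMap_max_same (n : ℕ) (u v : Fin n) (k l : ℕ) (huv : u ≤ v) :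
    (fun i => max (strMap n u v k i) (strMap n u v l i)) = strMap n u v (min k l) := by
  funext i
  simp only [strMap, lt_min_iff]
  by_cases h1 : (i : ℕ) < k <;> by_cases h2 : (i : ℕ) < l <;>
    simp [h1, h2, max_eq_right huv, max_eq_left huv]

lemma strMap_max_le (n : ℕ) (a b c : Fin n) (k l : ℕ) (hab : a ≤ b) (hbc : b ≤ c) :
    (fun i => max (strMap n a b k i) (strMap n b c l i)) = strMap n b c l := by
  funext i
  have h1 : strMap n a b k i ≤ b := by unfold strMap; split <;> simp [hab]
  have h2 : b ≤ strMap n b c l i := by unfold strMap; split <;> simp [hbc]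
  exact max_eq_right (h1.trans h2)

/-- For `a < b < c`, the union of the consecutive strings `STR^{(n)}{a,b}` and
`STR^{(n)}{b,c}` is closed under pointwise max and under composition. -/
theorem stmt12 (n : ℕ) (a b c : Fin n) (hab : a < b) (hbc : b < c) :
    ∀ α ∈ {γ | ∃ k ≤ n, γ = strMap n a b k ∨ γ = strMap n b c k},
    ∀ β ∈ {γ | ∃ k ≤ n, γ = strMap n a b k ∨ γ = strMap n b c k},
      (fun i => max (α i) (β i)) ∈ {γ | ∃ k ≤ n, γ = strMap n a b k ∨ γ = strMap n b c k} ∧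
      (β ∘ α) ∈ {γ | ∃ k ≤ n, γ = strMap n a b k ∨ γ = strMap n b c k} := by
  rintro α ⟨k, hk, hα | hα⟩ β ⟨l, hl, hβ | hβ⟩ <;> subst hα <;> subst hβ <;> constructor
  · exact ⟨min k l, le_trans (min_le_left k l) hk, Or.inl (strMap_max_same n a b k l hab.le)⟩
  · obtain ⟨m, hm, he⟩ := comp_mem n a b a b k l hk hab
    exact ⟨m, hm, Or.inl he⟩
  · exact ⟨l, hl, Or.inr (strMap_max_le n a b c k l hab.le hbc.le)⟩
  · obtain ⟨m, hm, he⟩ := comp_mem n a b b c k l hk hab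
    exact ⟨m, hm, Or.inr he⟩
  · refine ⟨k, hk, Or.inr ?_⟩
    have := strMap_max_le n a b c l k hab.le hbc.le
    funext i
    have hi := congrFun this i
    rw [max_comm]
    exact hi
  · obtain ⟨m, hm, he⟩ := comp_mem n b c a b k l hk hbc
    exact ⟨m, hm, Or.inl he⟩
  · exact ⟨min k l, le_trans (min_le_left k l) hk, Or.inr (strMap_max_same n b c k l hbc.le)⟩
  · obtain ⟨m, hm, he⟩ := comp_mem n b c b c k l hk hbc
    exact ⟨m, hm, Or.inr he⟩
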